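/- Four-term relation for m₀: for every integer l ≥ 1 (and with the convention m₀(s, −1) := 0, for every l ≥ 0), m₀(s, l) + f_I(s) · m₀(s t², l−1) = m₀(s t, l) + m₀(s t, l−1), as an identity of rational functions in c, t, s; here f_I(σ) := (1−c⁴σ)(1−tσ)(1+tc²σ)(1+c²σ)/((1−c⁴σ²)(1−t²c⁴σ²)), which equals f(σ | t^{1/2}c, −t^{1/2}c, c, −c). -/
import Mathlib


/-!
Four-term relation for `m₀`, as an identity in the rational function field
ℚ(c,t,s).
-/

open Finset

noncomputable section

/-- The rational function field ℚ(c,t,s). -/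
abbrev RF : Type := FractionRing (MvPolynomial (Fin 3) ℚ)

def gen (i : Fin 3) : RF := algebraMap (MvPolynomial (Fin 3) ℚ) RF (MvPolynomial.X i)

def c : RF := gen 0
def t : RF := gen 1
def s : RF := gen 2

/-- The q-Pochhammer symbol (z;q)_k. -/
def qPoch (z q : RF) (k : ℕ) : RF := ∏ j ∈ Finset.range k, (1 - z * q ^ j)

/-- `f_I(σ) = f(σ|t^{1/2}c,−t^{1/2}c,c,−c)` in its cancelled closed form. -/
def fI (σ : RF) : RF :=
  ((1 - c^4*σ) * (1 - t*σ) * (1 + t*c^2*σ) * (1 + c^2*σ)) /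
  ((1 - c^4*σ^2) * (1 - t^2*c^4*σ^2))

/-- `m₀(s,l)` for `l ≥ 0`. -/
def m0 (S : RF) (l : ℕ) : RF :=
  ((qPoch (1/c^2) t l * qPoch (S/t) t l * qPoch S t (2*l)) /
    (qPoch t t l * qPoch (S*c^2) t l * qPoch (S/t) t (2*l))) * c^(2*l)

/-- `m₀` extended by the convention `m₀(s,l) = 0` for `l < 0`. -/
def m0Z (S : RF) (l : ℤ) : RF := if l < 0 then 0 else m0 S l.toNat

/-! ### Auxiliary lemmas -/

lemma qPoch_succ (z : RF) (k : ℕ) :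
    qPoch z t (k+1) = qPoch z t k * (1 - z * t^k) :=
  Finset.prod_range_succ _ _

lemma qPoch_succ' (z : RF) (k : ℕ) :
    qPoch z t (k+1) = (1 - z) * qPoch (z*t) t k := by
  unfold qPoch
  rw [Finset.prod_range_succ']
  simp only [pow_zero, mul_one]
  rw [mul_comm]
  congr 1
  exact Finset.prod_congr rfl fun j _ => by ring

/-- evaluation at (1/2, 1/3, 1/5), used for nonvanishing certificates -/
def evp : MvPolynomial (Fin 3) ℚ →+* ℚ := MvPolynomial.eval ![(1:ℚ)/2, 1/3, 1/5]

lemma rf_ne_zero (p : MvPolynomial (Fin 3) ℚ) (h : evp p ≠ 0) :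
    algebraMap (MvPolynomial (Fin 3) ℚ) RF p ≠ 0 := by
  have hp : p ≠ 0 := by rintro rfl; simp at h
  intro hc
  exact hp (IsFractionRing.injective (MvPolynomial (Fin 3) ℚ) RF (by rw [map_zero]; exact hc))

lemma t_ne : t ≠ 0 := by
  apply rf_ne_zero
  simp [evp]

lemma c_ne : c ≠ 0 := by
  apply rf_ne_zero
  simp [evp]

lemma ts_ne : t - s ≠ 0 := by
  have h : t - s = algebraMap (MvPolynomial (Fin 3) ℚ) RF (MvPolynomial.X 1 - MvPolynomial.X 2) := by
    simp [t, s, gen, map_sub]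
  rw [h]
  apply rf_ne_zero
  simp [evp]
  norm_num

lemma aux_ne (a b d : ℕ) (h : a + b + d ≠ 0) : (1:RF) - c^a * t^b * s^d ≠ 0 := by
  have key : (1:RF) - c^a * t^b * s^d
      = algebraMap (MvPolynomial (Fin 3) ℚ) RF
        (1 - (MvPolynomial.X 0)^a * (MvPolynomial.X 1)^b * (MvPolynomial.X 2)^d) := by
    simp [c, t, s, gen, map_sub, map_mul, map_pow]
  rw [key]
  apply rf_ne_zero
  have he : evp (1 - (MvPolynomial.X 0)^a * (MvPolynomial.X 1)^b * (MvPolynomial.X 2)^d)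
      = 1 - ((1:ℚ)/2)^a * ((1:ℚ)/3)^b * ((1:ℚ)/5)^d := by
    simp [evp]
  rw [he]
  have hq : ((1:ℚ)/2)^a * ((1:ℚ)/3)^b * ((1:ℚ)/5)^d < 1 := by
    calc ((1:ℚ)/2)^a * ((1:ℚ)/3)^b * ((1:ℚ)/5)^d
        ≤ ((1:ℚ)/2)^a * ((1:ℚ)/2)^b * ((1:ℚ)/2)^d := by gcongr <;> norm_num
      _ = ((1:ℚ)/2)^(a+b+d) := by rw [← pow_add, ← pow_add]
      _ < 1 := by
          apply pow_lt_one₀ (by norm_num) (by norm_num) h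
  intro h0
  have : ((1:ℚ)/2)^a * ((1:ℚ)/3)^b * ((1:ℚ)/5)^d = 1 := by linarith [sub_eq_zero.mp h0]
  linarith

/-! ### Nonvanishing facts -/

lemma nz_s : (1:RF) - s ≠ 0 := by
  rw [show (1:RF) - s = 1 - c^0*t^0*s^1 from by ring]; exact aux_ne 0 0 1 (by omega)
lemma nz_st : (1:RF) - s*t ≠ 0 := by
  rw [show (1:RF) - s*t = 1 - c^0*t^1*s^1 from by ring]; exact aux_ne 0 1 1 (by omega)
lemma nz_stc : (1:RF) - s*t*c^2 ≠ 0 := by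
  rw [show (1:RF) - s*t*c^2 = 1 - c^2*t^1*s^1 from by ring]; exact aux_ne 2 1 1 (by omega)
lemma nz_sc : (1:RF) - s*c^2 ≠ 0 := by
  rw [show (1:RF) - s*c^2 = 1 - c^2*t^0*s^1 from by ring]; exact aux_ne 2 0 1 (by omega)
lemma nz_tX (n : ℕ) : (1:RF) - t*t^n ≠ 0 := by
  rw [show (1:RF) - t*t^n = 1 - c^0*t^(n+1)*s^0 from by ring]; exact aux_ne 0 (n+1) 0 (by omega)
lemma nz_sX (n : ℕ) : (1:RF) - s*t^n ≠ 0 := by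
  rw [show (1:RF) - s*t^n = 1 - c^0*t^n*s^1 from by ring]; exact aux_ne 0 n 1 (by omega)
lemma nz_stcX (n : ℕ) : (1:RF) - s*t*c^2*t^n ≠ 0 := by
  rw [show (1:RF) - s*t*c^2*t^n = 1 - c^2*t^(n+1)*s^1 from by ring]
  exact aux_ne 2 (n+1) 1 (by omega)
lemma nz_c4s2 : (1:RF) - c^4*s^2 ≠ 0 := by
  rw [show (1:RF) - c^4*s^2 = 1 - c^4*t^0*s^2 from by ring]; exact aux_ne 4 0 2 (by omega)
lemma nz_t2c4s2 : (1:RF) - t^2*c^4*s^2 ≠ 0 := by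
  rw [show (1:RF) - t^2*c^4*s^2 = 1 - c^4*t^2*s^2 from by ring]; exact aux_ne 4 2 2 (by omega)
lemma e2' : (1:RF) - s/t = (t-s)/t := by
  rw [sub_div, div_self t_ne]
lemma nz_div : (1:RF) - s/t ≠ 0 := by
  rw [e2']; exact div_ne_zero ts_ne t_ne
lemma nzp4 (n : ℕ) : qPoch t t n ≠ 0 := by
  refine Finset.prod_ne_zero_iff.mpr fun j _ => ?_
  rw [show (1:RF) - t*t^j = 1 - c^0*t^(j+1)*s^0 from by ring]; exact aux_ne 0 (j+1) 0 (by omega)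
lemma nzp5 (n : ℕ) : qPoch (s*t*c^2) t n ≠ 0 := by
  refine Finset.prod_ne_zero_iff.mpr fun j _ => ?_
  rw [show (1:RF) - s*t*c^2*t^j = 1 - c^2*t^(j+1)*s^1 from by ring]
  exact aux_ne 2 (j+1) 1 (by omega)
lemma nzp6 (k : ℕ) : qPoch s t k ≠ 0 := by
  refine Finset.prod_ne_zero_iff.mpr fun j _ => ?_
  rw [show (1:RF) - s*t^j = 1 - c^0*t^j*s^1 from by ring]; exact aux_ne 0 j 1 (by omega)
lemma nzq3 (k : ℕ) : qPoch (s*t) t k ≠ 0 := by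
  refine Finset.prod_ne_zero_iff.mpr fun j _ => ?_
  rw [show (1:RF) - s*t*t^j = 1 - c^0*t^(j+1)*s^1 from by ring]; exact aux_ne 0 (j+1) 1 (by omega)
lemma nzq5 (n : ℕ) : qPoch (s*t^2*c^2) t n ≠ 0 := by
  refine Finset.prod_ne_zero_iff.mpr fun j _ => ?_
  rw [show (1:RF) - s*t^2*c^2*t^j = 1 - c^2*t^(j+2)*s^1 from by ring]
  exact aux_ne 2 (j+2) 1 (by omega)

/-! ### Shift relations -/

lemma rel2 (n : ℕ) : (1 - s) * qPoch (s*t) t n = qPoch s t n * (1 - s*t^n) := by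
  have h1 := qPoch_succ' s n
  have h2 := qPoch_succ s n
  linear_combination h2 - h1

lemma rel3 (k : ℕ) : (1 - s*t) * qPoch (s*t^2) t k = qPoch (s*t) t k * (1 - s*t*t^k) := by
  have h1 := qPoch_succ' (s*t) k
  rw [show s*t*t = s*t^2 from by ring] at h1
  have h2 := qPoch_succ (s*t) k
  linear_combination h2 - h1

lemma rel5 (n : ℕ) : (1 - s*t*c^2) * qPoch (s*t^2*c^2) t n
    = qPoch (s*t*c^2) t n * (1 - s*t*c^2*t^n) := by
  have h1 := qPoch_succ' (s*t*c^2) n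
  rw [show s*t*c^2*t = s*t^2*c^2 from by ring] at h1
  have h2 := qPoch_succ (s*t*c^2) n
  linear_combination h2 - h1

lemma e1' (n : ℕ) : (1:RF) - 1/c^2*t^n = (c^2 - t^n)/c^2 := by
  rw [sub_div, div_self (pow_ne_zero 2 c_ne)]; ring

lemma eGA (n : ℕ) : ((1:RF) - 1/c^2*t^n) * (1 - s*t^(2*n+1)) * c^2
    = (c^2 - t^n) * (1 - s*t^(2*n+1)) := by
  rw [e1' n, div_mul_eq_mul_div, div_mul_cancel₀ _ (pow_ne_zero 2 c_ne)]

lemma eGC (n : ℕ) : ((1:RF) - 1/c^2*t^n) * (1 - s*t^n) * (1 - s*t*t^(2*n+1)) * c^2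
    = (c^2 - t^n) * (1 - s*t^n) * (1 - s*t*t^(2*n+1)) := by
  rw [e1' n, div_mul_eq_mul_div, div_mul_eq_mul_div, div_mul_cancel₀ _ (pow_ne_zero 2 c_ne)]

/-! ### The four m₀-terms relative to the common core -/

set_option maxHeartbeats 1000000 in
lemma stepA (n : ℕ) : m0 s (n+1) =
    (qPoch (1/c^2) t n * qPoch s t n * qPoch s t (2*n) /
      (qPoch t t n * qPoch (s*t*c^2) t n * qPoch s t (2*n)) * c^(2*n)) *
    (((1 - 1/c^2*t^n) * (1 - s*t^(2*n+1)) * c^2) / ((1 - t*t^n) * (1 - s*c^2))) := by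
  rw [m0]
  rw [show 2*(n+1) = 2*n+1+1 from by ring]
  rw [qPoch_succ (1/c^2) n, qPoch_succ' (s/t) n, qPoch_succ s (2*n+1), qPoch_succ t n,
    qPoch_succ' (s*c^2) n, qPoch_succ' (s/t) (2*n+1)]
  rw [show s/t*t = s from div_mul_cancel₀ s t_ne]
  rw [qPoch_succ s (2*n)]
  rw [show s*c^2*t = s*t*c^2 from by ring]
  conv_lhs => rw [div_mul_eq_mul_div]
  conv_rhs => rw [div_mul_eq_mul_div, div_mul_div_comm]
  refine (div_eq_div_iff ?_ ?_).mpr ?_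
  · repeat' apply mul_ne_zero
    · exact nzp4 n
    · exact nz_tX n
    · exact nz_sc
    · exact nzp5 n
    · exact nz_div
    · exact nzp6 (2*n)
    · exact nz_sX (2*n)
  · repeat' apply mul_ne_zero
    · exact nzp4 n
    · exact nzp5 n
    · exact nzp6 (2*n)
    · exact nz_tX n
    · exact nz_sc
  · ring

set_option maxHeartbeats 1000000 in
lemma stepB (n : ℕ) : m0 (s*t^2) n =
    (qPoch (1/c^2) t n * qPoch s t n * qPoch s t (2*n) /
      (qPoch t t n * qPoch (s*t*c^2) t n * qPoch s t (2*n)) * c^(2*n)) *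
    (((1 - s*t^n) * (1 - s*t*t^(2*n)) * (1 - s*t*c^2)) /
      ((1 - s) * (1 - s*t) * (1 - s*t*c^2*t^n))) := by
  have h125 : ((1 - s) * qPoch (s*t) t n) * ((1 - s*t) * qPoch (s*t^2) t (2*n)) *
      (qPoch (s*t*c^2) t n * (1 - s*t*c^2*t^n))
      = (qPoch s t n * (1 - s*t^n)) * (qPoch (s*t) t (2*n) * (1 - s*t*t^(2*n))) *
      ((1 - s*t*c^2) * qPoch (s*t^2*c^2) t n) := by
    rw [rel2 n, rel3 (2*n), ← rel5 n]
  rw [m0]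
  rw [show s*t^2/t = s*t from by rw [mul_div_assoc, sq, mul_div_assoc, div_self t_ne, mul_one]]
  conv_lhs => rw [div_mul_eq_mul_div]
  conv_rhs => rw [div_mul_eq_mul_div, div_mul_div_comm]
  refine (div_eq_div_iff ?_ ?_).mpr ?_
  · repeat' apply mul_ne_zero
    · exact nzp4 n
    · exact nzq5 n
    · exact nzq3 (2*n)
  · repeat' apply mul_ne_zero
    · exact nzp4 n
    · exact nzp5 n
    · exact nzp6 (2*n)
    · exact nz_s
    · exact nz_st
    · exact nz_stcX n
  · linear_combination (qPoch (1/c^2) t n * qPoch t t n * qPoch s t (2*n) * c^(2*n)) * h125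

set_option maxHeartbeats 1000000 in
lemma stepC (n : ℕ) : m0 (s*t) (n+1) =
    (qPoch (1/c^2) t n * qPoch s t n * qPoch s t (2*n) /
      (qPoch t t n * qPoch (s*t*c^2) t n * qPoch s t (2*n)) * c^(2*n)) *
    (((1 - 1/c^2*t^n) * (1 - s*t^n) * (1 - s*t*t^(2*n+1)) * c^2) /
      ((1 - s) * (1 - t*t^n) * (1 - s*t*c^2*t^n))) := by
  have hr3 := rel2 (2*n)
  rw [m0]
  rw [show 2*(n+1) = 2*n+1+1 from by ring]
  rw [show s*t/t = s from by rw [mul_div_assoc, div_self t_ne, mul_one]]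
  rw [qPoch_succ (1/c^2) n, qPoch_succ s n, qPoch_succ (s*t) (2*n+1), qPoch_succ t n,
    qPoch_succ (s*t*c^2) n, qPoch_succ s (2*n+1)]
  rw [qPoch_succ s (2*n), qPoch_succ (s*t) (2*n)]
  conv_lhs => rw [div_mul_eq_mul_div]
  conv_rhs => rw [div_mul_eq_mul_div, div_mul_div_comm]
  refine (div_eq_div_iff ?_ ?_).mpr ?_
  · repeat' apply mul_ne_zero
    · exact nzp4 n
    · exact nz_tX n
    · exact nzp5 n
    · exact nz_stcX n
    · exact nzp6 (2*n)
    · exact nz_sX (2*n)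
    · exact nz_sX (2*n+1)
  · repeat' apply mul_ne_zero
    · exact nzp4 n
    · exact nzp5 n
    · exact nzp6 (2*n)
    · exact nz_s
    · exact nz_tX n
    · exact nz_stcX n
  · linear_combination (qPoch (1/c^2) t n * qPoch s t n * qPoch t t n * qPoch (s*t*c^2) t n *
      qPoch s t (2*n) * (1 - 1/c^2*t^n) * (1 - s*t^n) * (1 - s*t*t^(2*n)) * (1 - s*t*t^(2*n+1)) *
      (1 - t*t^n) * (1 - s*t*c^2*t^n) * c^(2*n) * c^2) * hr3

set_option maxHeartbeats 1000000 in
lemma stepD (n : ℕ) : m0 (s*t) n =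
    (qPoch (1/c^2) t n * qPoch s t n * qPoch s t (2*n) /
      (qPoch t t n * qPoch (s*t*c^2) t n * qPoch s t (2*n)) * c^(2*n)) *
    ((1 - s*t^(2*n)) / (1 - s)) := by
  have hr3 := rel2 (2*n)
  rw [m0]
  rw [show s*t/t = s from by rw [mul_div_assoc, div_self t_ne, mul_one]]
  conv_lhs => rw [div_mul_eq_mul_div]
  conv_rhs => rw [div_mul_eq_mul_div, div_mul_div_comm]
  refine (div_eq_div_iff ?_ ?_).mpr ?_
  · repeat' apply mul_ne_zero
    · exact nzp4 n
    · exact nzp5 n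
    · exact nzp6 (2*n)
  · repeat' apply mul_ne_zero
    · exact nzp4 n
    · exact nzp5 n
    · exact nzp6 (2*n)
    · exact nz_s
  · linear_combination (qPoch (1/c^2) t n * qPoch s t n * qPoch t t n * qPoch (s*t*c^2) t n *
      qPoch s t (2*n) * c^(2*n)) * hr3

set_option maxHeartbeats 1000000 in
lemma stepMB (n : ℕ) : fI s * (((1 - s*t^n) * (1 - s*t*t^(2*n)) * (1 - s*t*c^2)) /
      ((1-s) * (1 - s*t) * (1 - s*t*c^2*t^n)))
    = ((1 - c^4*s) * (1 - s*t^n) * (1 - s*t*t^(2*n))) /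
      ((1 - s*c^2) * (1 - s*t*c^2*t^n) * (1-s)) := by
  rw [fI]
  rw [div_mul_div_comm, div_eq_div_iff
    (mul_ne_zero (mul_ne_zero nz_c4s2 nz_t2c4s2)
      (mul_ne_zero (mul_ne_zero nz_s nz_st) (nz_stcX n)))
    (mul_ne_zero (mul_ne_zero nz_sc (nz_stcX n)) nz_s)]
  ring

set_option maxHeartbeats 1000000 in
lemma stepKEY (n : ℕ) :
    ((c^2 - t^n) * (1 - s*t^(2*n+1))) / ((1 - t*t^n) * (1 - s*c^2))
    + ((1 - c^4*s) * (1 - s*t^n) * (1 - s*t*t^(2*n))) /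
        ((1 - s*c^2) * (1 - s*t*c^2*t^n) * (1-s))
    = ((c^2 - t^n) * (1 - s*t^n) * (1 - s*t*t^(2*n+1))) /
        ((1-s) * (1 - t*t^n) * (1 - s*t*c^2*t^n))
    + (1 - s*t^(2*n)) / (1-s) := by
  rw [div_add_div _ _ (mul_ne_zero (nz_tX n) nz_sc)
    (mul_ne_zero (mul_ne_zero nz_sc (nz_stcX n)) nz_s)]
  rw [div_add_div _ _ (mul_ne_zero (mul_ne_zero nz_s (nz_tX n)) (nz_stcX n)) nz_s]
  rw [div_eq_div_iff
    (mul_ne_zero (mul_ne_zero (nz_tX n) nz_sc)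
      (mul_ne_zero (mul_ne_zero nz_sc (nz_stcX n)) nz_s))
    (mul_ne_zero (mul_ne_zero (mul_ne_zero nz_s (nz_tX n)) (nz_stcX n)) nz_s)]
  ring

lemma m0_zero (S : RF) : m0 S 0 = 1 := by
  simp [m0, qPoch]

set_option maxHeartbeats 1000000 in
lemma step (n : ℕ) :
    m0 s (n+1) + fI s * m0 (s*t^2) n = m0 (s*t) (n+1) + m0 (s*t) n := by
  rw [stepA n, stepB n, stepC n, stepD n, eGA n, eGC n]
  have KEY := stepKEY n
  have MB := stepMB n
  linear_combination
    (qPoch (1/c^2) t n * qPoch s t n * qPoch s t (2*n) /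
      (qPoch t t n * qPoch (s*t*c^2) t n * qPoch s t (2*n)) * c^(2*n)) * KEY
    + (qPoch (1/c^2) t n * qPoch s t n * qPoch s t (2*n) /
      (qPoch t t n * qPoch (s*t*c^2) t n * qPoch s t (2*n)) * c^(2*n)) * MB

/-- Four-term relation for `m₀`:
`m₀(s,l) + f_I(s) m₀(st²,l−1) = m₀(st,l) + m₀(st,l−1)`. -/
theorem m0_four_term (l : ℤ) (hl : 0 ≤ l) :
    m0Z s l + fI s * m0Z (s*t^2) (l-1) =
    m0Z (s*t) l + m0Z (s*t) (l-1) := by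
  obtain ⟨m, rfl⟩ := Int.eq_ofNat_of_zero_le hl
  cases m with
  | zero =>
      norm_num [m0Z, m0_zero]
  | succ n =>
      have h1 : ((n+1 : ℕ) : ℤ) - 1 = (n : ℤ) := by push_cast; ring
      rw [h1]
      simp only [m0Z, Int.toNat_natCast]
      rw [if_neg (by omega), if_neg (by omega), if_neg (by omega), if_neg (by omega)]
      exact step n

end
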